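/- Let α ∈ ℝ be irrational with continued-fraction denominators (q_m), and fix n with q_{n+1} > 100 q_n. Then every integer k with 0 < |k| < q_{n+1}/6 that is not an integer multiple of q_n satisfies ‖kα‖_{ℝ/ℤ} ≥ 1/(4q_n). -/

import Mathlib

open scoped Real
open Filter Matrix

noncomputable section

/-- The denominators `q_n` of the continued fraction approximants of `α`. -/
def cfDen (α : ℝ) (n : ℕ) : ℝ := (GenContFract.of α).dens n


/-- `‖x‖_{ℝ/ℤ}`: the distance from `x` to the nearest integer. -/
def distZ (x : ℝ) : ℝ := |x - round x|

open GenContFract in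
private lemma stmt9_not_term (α : ℝ) (hα : Irrational α) (n : ℕ) :
    ¬(GenContFract.of α).TerminatedAt n := by
  intro h
  obtain ⟨q, hq⟩ := (GenContFract.terminates_iff_rat α).mp ⟨n, h⟩
  exact hα ⟨q, hq.symm⟩

open GenContFract in
private lemma stmt9_conts_int (α : ℝ) (hα : Irrational α) :
    ∀ m : ℕ, (∃ a : ℤ, ((GenContFract.of α).contsAux m).a = (a : ℝ)) ∧
      (∃ b : ℤ, ((GenContFract.of α).contsAux m).b = (b : ℝ)) := by
  have key : ∀ m : ℕ,
      ((∃ a : ℤ, ((GenContFract.of α).contsAux m).a = (a : ℝ)) ∧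
        (∃ b : ℤ, ((GenContFract.of α).contsAux m).b = (b : ℝ))) ∧
      ((∃ a : ℤ, ((GenContFract.of α).contsAux (m+1)).a = (a : ℝ)) ∧
        (∃ b : ℤ, ((GenContFract.of α).contsAux (m+1)).b = (b : ℝ))) := by
    intro m
    induction m with
    | zero =>
      constructor
      · rw [zeroth_contAux_eq_one_zero]
        exact ⟨⟨1, by norm_num⟩, ⟨0, by norm_num⟩⟩
      · rw [first_contAux_eq_h_one, of_h_eq_floor]
        exact ⟨⟨⌊α⌋, rfl⟩, ⟨1, by norm_num⟩⟩
    | succ m ih =>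
      refine ⟨ih.2, ?_⟩
      obtain ⟨gp, hgp⟩ : ∃ gp, (GenContFract.of α).s.get? m = some gp :=
        Option.ne_none_iff_exists'.1 (stmt9_not_term α hα m)
      obtain ⟨ha1, z, hz⟩ := of_partNum_eq_one_and_exists_int_partDen_eq hgp
      rw [contsAux_recurrence hgp rfl rfl]
      obtain ⟨⟨a0, ha0⟩, ⟨b0, hb0⟩⟩ := ih.1
      obtain ⟨⟨a1, ha1'⟩, ⟨b1, hb1⟩⟩ := ih.2
      exact ⟨⟨z * a1 + a0, by simp [ha1, hz, ha0, ha1'] <;> (push_cast; ring)⟩,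
        ⟨z * b1 + b0, by simp [ha1, hz, hb0, hb1] <;> (push_cast; ring)⟩⟩
  exact fun m => (key m).1

open GenContFract in
private lemma stmt9_num_den_int (α : ℝ) (hα : Irrational α) (m : ℕ) :
    (∃ a : ℤ, (GenContFract.of α).nums m = (a : ℝ)) ∧
      (∃ b : ℤ, (GenContFract.of α).dens m = (b : ℝ)) := by
  rw [num_eq_conts_a, den_eq_conts_b, nth_cont_eq_succ_nth_contAux]
  exact stmt9_conts_int α hα (m + 1)

open GenContFract in
private lemma stmt9_den_ge_one (α : ℝ) (hα : Irrational α) (m : ℕ) :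
    (1 : ℝ) ≤ (GenContFract.of α).dens m := by
  have h := succ_nth_fib_le_of_nth_den (v := α) (n := m)
    (Or.inr (stmt9_not_term α hα (m - 1)))
  have : (1 : ℕ) ≤ Nat.fib (m + 1) := Nat.fib_pos.mpr m.succ_pos
  calc (1 : ℝ) ≤ (Nat.fib (m + 1) : ℝ) := by exact_mod_cast this
    _ ≤ _ := h

/-- If `q_{n+1} > 100 q_n`, then every integer `k` with
`0 < |k| < q_{n+1}/6` that is not an integer multiple of `q_n` satisfies
`‖kα‖_{ℝ/ℤ} ≥ 1/(4 q_n)`. -/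
theorem statement9
    (α : ℝ) (hα : Irrational α) (n : ℕ)
    (hq : 100 * cfDen α n < cfDen α (n + 1))
    (k : ℤ) (hk0 : k ≠ 0) (hklt : |(k : ℝ)| < cfDen α (n + 1) / 6)
    (hkq : ∀ m : ℤ, (k : ℝ) ≠ (m : ℝ) * cfDen α n) :
    1 / (4 * cfDen α n) ≤ distZ ((k : ℝ) * α) := by
  classical
  obtain ⟨⟨a, ha⟩, ⟨b, hb⟩⟩ := stmt9_num_den_int α hα n
  obtain ⟨⟨A, hA⟩, ⟨B, hB⟩⟩ := stmt9_num_den_int α hα (n + 1)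
  have hq1 : (1 : ℝ) ≤ cfDen α n := stmt9_den_ge_one α hα n
  have hQ1 : (1 : ℝ) ≤ cfDen α (n + 1) := stmt9_den_ge_one α hα (n + 1)
  have hqpos : (0 : ℝ) < cfDen α n := by linarith
  have hQpos : (0 : ℝ) < cfDen α (n + 1) := by linarith
  -- determinant / coprimality
  have hdet : (GenContFract.of α).nums n * (GenContFract.of α).dens (n + 1) -
      (GenContFract.of α).dens n * (GenContFract.of α).nums (n + 1) = (-1 : ℝ) ^ (n + 1) :=
    SimpContFract.determinant (s := SimpContFract.of α) (stmt9_not_term α hα n)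
  have hdetZ : a * B - b * A = (-1 : ℤ) ^ (n + 1) := by
    have : ((a * B - b * A : ℤ) : ℝ) = (((-1 : ℤ) ^ (n + 1) : ℤ) : ℝ) := by
      push_cast
      rw [← ha, ← hb, ← hA, ← hB]
      unfold cfDen at *
      push_cast
      linarith [hdet]
    exact_mod_cast this
  have hcop : IsCoprime b a := by
    refine ⟨(-1 : ℤ) ^ (n + 1) * (-A), (-1 : ℤ) ^ (n + 1) * B, ?_⟩
    have h2 : ((-1 : ℤ) ^ (n + 1)) * ((-1 : ℤ) ^ (n + 1)) = 1 := by
      rw [← pow_add]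
      exact Even.neg_one_pow ⟨n + 1, by ring⟩
    calc (-1 : ℤ) ^ (n + 1) * (-A) * b + (-1 : ℤ) ^ (n + 1) * B * a
        = ((-1 : ℤ) ^ (n + 1)) * (a * B - b * A) := by ring
      _ = ((-1 : ℤ) ^ (n + 1)) * ((-1 : ℤ) ^ (n + 1)) := by rw [hdetZ]
      _ = 1 := h2
  -- approximation bound : |q α - p| ≤ 1 / Q
  have happrox : |cfDen α n * α - (a : ℝ)| ≤ 1 / cfDen α (n + 1) := by
    have h := GenContFract.abs_sub_convs_le (v := α) (n := n) (stmt9_not_term α hα n)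
    rw [GenContFract.conv_eq_num_div_den, ha] at h
    have h2 : |α - (a : ℝ) / cfDen α n| ≤ 1 / (cfDen α n * cfDen α (n + 1)) := h
    have heq : cfDen α n * α - (a : ℝ) = cfDen α n * (α - (a : ℝ) / cfDen α n) := by
      field_simp
    rw [heq, abs_mul, abs_of_pos hqpos]
    calc cfDen α n * |α - (a : ℝ) / cfDen α n|
        ≤ cfDen α n * (1 / (cfDen α n * cfDen α (n + 1))) :=
          mul_le_mul_of_nonneg_left h2 hqpos.le
      _ = 1 / cfDen α (n + 1) := by field_simp
  -- the key integer D
  set r : ℤ := round ((k : ℝ) * α) with hr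
  set D : ℤ := r * b - k * a with hD
  have hb' : cfDen α n = (b : ℝ) := hb
  have hbne : b ≠ 0 := by
    intro h
    rw [h] at hb'
    simp at hb'
    linarith
  have hDne : D ≠ 0 := by
    intro h
    have hrb : k * a = b * r := by
      have := sub_eq_zero.mp h
      linarith
    have hbk : b ∣ k := hcop.dvd_of_dvd_mul_right ⟨r, hrb⟩
    obtain ⟨m, hm⟩ := hbk
    exact hkq m (by rw [hm, hb']; push_cast; ring)
  have hD1 : (1 : ℝ) ≤ |(D : ℝ)| := by
    have : (1 : ℤ) ≤ |D| := Int.one_le_abs hDne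
    calc (1 : ℝ) = ((1 : ℤ) : ℝ) := by norm_num
      _ ≤ (|D| : ℝ) := by exact_mod_cast this
      _ = |(D : ℝ)| := by push_cast; ring
  -- decomposition
  have hdecomp : (D : ℝ) = cfDen α n * ((r : ℝ) - (k : ℝ) * α) +
      (k : ℝ) * (cfDen α n * α - (a : ℝ)) := by
    show ((r * b - k * a : ℤ) : ℝ) = _
    push_cast
    rw [hb']
    ring
  have hbound : |(D : ℝ)| ≤ cfDen α n * distZ ((k : ℝ) * α) + |(k : ℝ)| * |cfDen α n * α - (a : ℝ)| := by
    rw [hdecomp]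
    calc |cfDen α n * ((r : ℝ) - (k : ℝ) * α) + (k : ℝ) * (cfDen α n * α - (a : ℝ))|
        ≤ |cfDen α n * ((r : ℝ) - (k : ℝ) * α)| + |(k : ℝ) * (cfDen α n * α - (a : ℝ))| :=
          abs_add_le _ _
      _ = cfDen α n * |(r : ℝ) - (k : ℝ) * α| + |(k : ℝ)| * |cfDen α n * α - (a : ℝ)| := by
          rw [abs_mul, abs_mul, abs_of_pos hqpos]
      _ = cfDen α n * distZ ((k : ℝ) * α) + |(k : ℝ)| * |cfDen α n * α - (a : ℝ)| := by
          rw [distZ, abs_sub_comm]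
  have hk16 : |(k : ℝ)| * |cfDen α n * α - (a : ℝ)| ≤ 1 / 6 := by
    calc |(k : ℝ)| * |cfDen α n * α - (a : ℝ)|
        ≤ (cfDen α (n + 1) / 6) * (1 / cfDen α (n + 1)) := by
          apply mul_le_mul hklt.le happrox (abs_nonneg _)
          positivity
      _ = 1 / 6 := by field_simp
  have hdist : 5 / 6 ≤ cfDen α n * distZ ((k : ℝ) * α) := by linarith
  have hdnn : 0 ≤ distZ ((k : ℝ) * α) := abs_nonneg _
  rw [div_le_iff₀ (by positivity)]
  nlinarith [hdist, hqpos, hdnn]
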